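/- arXiv:2007.11968 — 2 statements merged into one kernel-verified Lean document; each statement's English description precedes it below -/
import Mathlib

section
/- Fix amplitude A > 0 and let (v(t), w(t)) solve v' = F(v) − w + I_A^β(t), w' = b·v − c·w with initial condition at the resting fixed point (v*, w*) of the unforced system. Let U be an open interval containing v* on which the vector field is 2k-Lipschitz (k ≥ max(1, b, c)). Then for all t up to the exit time from U (capped at 2T_A^β), |v(t) − v*| + |w(t) − w*| ≤ (A²/β)·e^{4kA/β}. In particular, for β sufficiently large the trajectory remains in any prescribed neighborhood of (v*, w*) throughout [0, 2T_A^β]. -/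
/-- The tent input of amplitude `A` and slope `β`: `β t` on `[0, A/β]`,
`β (2A/β - t)` on `[A/β, 2A/β]`, and `0` otherwise. -/
noncomputable def tent (A β t : ℝ) : ℝ :=
  if 0 ≤ t ∧ t ≤ A / β then β * t
  else if A / β ≤ t ∧ t ≤ 2 * (A / β) then β * (2 * (A / β) - t)
  else 0

lemma tent_eq_maxmin {A β : ℝ} (hA : 0 < A) (hβ : 0 < β) (t : ℝ) :
    tent A β t = max 0 (min (β * t) (β * (2 * (A / β) - t))) := by
  have hT : 0 < A / β := div_pos hA hβ
  unfold tent
  split_ifs with h1 h2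
  · rw [min_eq_left (by nlinarith [h1.1, h1.2]), max_eq_right (by nlinarith [h1.1])]
  · rw [min_eq_right (by nlinarith [h2.1, h2.2]), max_eq_right (by nlinarith [h2.2])]
  · push_neg at h1 h2
    rcases le_or_gt 0 t with h0 | h0
    · have hTt : A / β < t := lt_of_not_ge fun h => absurd (h1 h0) (not_lt.2 h)
      have h2T : 2 * (A / β) < t := lt_of_not_ge fun h => absurd (h2 hTt.le) (not_lt.2 h)
      rw [max_eq_left]
      exact le_trans (min_le_right _ _) (by nlinarith)
    · rw [max_eq_left]
      exact le_trans (min_le_left _ _) (by nlinarith)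

lemma tent_nonneg {A β : ℝ} (hA : 0 < A) (hβ : 0 < β) (t : ℝ) : 0 ≤ tent A β t := by
  rw [tent_eq_maxmin hA hβ]; exact le_max_left _ _

lemma tent_continuous {A β : ℝ} (hA : 0 < A) (hβ : 0 < β) : Continuous (tent A β) := by
  have : tent A β = fun t => max 0 (min (β * t) (β * (2 * (A / β) - t))) :=
    funext (tent_eq_maxmin hA hβ)
  rw [this]
  fun_prop

/-- Gronwall bound for the response to the tent input started at the
resting equilibrium `(v*, w*)`: up to the exit time from `U` (capped at `2T_A^β`),
`|v(t) - v*| + |w(t) - w*| ≤ (A²/β) e^{4kA/β}`. -/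
theorem stmt_5 (F : ℝ → ℝ) (b c A : ℝ) (k : NNReal)
    (vstar wstar : ℝ) (U : Set ℝ) (hUopen : IsOpen U) (hvU : vstar ∈ U)
    (hb : 0 < b) (hc : 0 ≤ c) (hA : 0 < A)
    (hk : max 1 (max b c) ≤ (k : ℝ))
    (hLip : LipschitzOnWith k F U)
    (heq1 : F vstar - wstar = 0) (heq2 : b * vstar - c * wstar = 0)
    (β : ℝ) (hβ : 0 < β)
    (v w : ℝ → ℝ) (hv0 : v 0 = vstar) (hw0 : w 0 = wstar)
    (hsol : ∀ t ∈ Set.Icc (0:ℝ) (2 * (A / β)),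
      HasDerivAt v (F (v t) - w t + tent A β t) t ∧
      HasDerivAt w (b * v t - c * w t) t) :
    ∀ t ∈ Set.Icc (0:ℝ) (2 * (A / β)),
      (∀ s ∈ Set.Icc (0:ℝ) t, v s ∈ U) →
      |v t - vstar| + |w t - wstar| ≤ A ^ 2 / β * Real.exp (4 * k * A / β) := by
  have hT : 0 < A / β := div_pos hA hβ
  have hk1 : (1:ℝ) ≤ k := le_trans (le_max_left _ _) hk
  have hkb : b ≤ (k:ℝ) := le_trans (le_trans (le_max_left _ _) (le_max_right _ _)) hk
  have hkc : c ≤ (k:ℝ) := le_trans (le_trans (le_max_right _ _) (le_max_right _ _)) hk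
  have hcont := tent_continuous hA hβ
  set J : ℝ → ℝ := fun u => ∫ s in (0:ℝ)..u, tent A β s with hJdef
  have hJd : ∀ u : ℝ, HasDerivAt J (tent A β u) u := fun u =>
    (hcont.integral_hasStrictDerivAt 0 u).hasDerivAt
  have hJ0 : J 0 = 0 := intervalIntegral.integral_same
  -- total integral
  have hJval : J (2 * (A / β)) = A ^ 2 / β := by
    have h1 : (∫ s in (0:ℝ)..(A/β), tent A β s) = ∫ s in (0:ℝ)..(A/β), β * s := by
      apply intervalIntegral.integral_congr
      intro s hs
      rw [Set.uIcc_of_le hT.le] at hs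
      unfold tent
      rw [if_pos ⟨hs.1, hs.2⟩]
    have h2 : (∫ s in (A/β)..(2*(A/β)), tent A β s)
        = ∫ s in (A/β)..(2*(A/β)), β * (2 * (A / β) - s) := by
      apply intervalIntegral.integral_congr
      intro s hs
      rw [Set.uIcc_of_le (by linarith)] at hs
      unfold tent
      split_ifs with hc1 hc2
      · have hs' : s = A / β := le_antisymm hc1.2 hs.1
        rw [hs']; ring
      · rfl
      · exact absurd ⟨hs.1, hs.2⟩ hc2
    have hadd := intervalIntegral.integral_add_adjacent_intervals
      (hcont.intervalIntegrable (μ := MeasureTheory.volume) 0 (A/β))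
      (hcont.intervalIntegrable (μ := MeasureTheory.volume) (A/β) (2*(A/β)))
    have e1 : (∫ s in (0:ℝ)..(A/β), β * s) = β * ((A/β)^2 / 2) := by
      rw [intervalIntegral.integral_const_mul β (fun s => s), integral_id]
      ring
    have e2 : (∫ s in (A/β)..(2*(A/β)), β * (2 * (A / β) - s)) = β * ((A/β)^2 / 2) := by
      rw [intervalIntegral.integral_const_mul β (fun s => 2 * (A/β) - s),
        intervalIntegral.integral_comp_sub_left (fun x => x) (2 * (A/β)), integral_id]
      ring
    show (∫ s in (0:ℝ)..(2*(A/β)), tent A β s) = A ^ 2 / β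
    rw [← hadd, h1, h2, e1, e2]
    field_simp
    ring
  -- bounds on J
  have hJnonneg : ∀ u : ℝ, 0 ≤ u → 0 ≤ J u := fun u hu =>
    intervalIntegral.integral_nonneg hu (fun s _ => tent_nonneg hA hβ s)
  have hJle : ∀ u ∈ Set.Icc (0:ℝ) (2 * (A / β)), J u ≤ A ^ 2 / β := by
    intro u hu
    have hadd := intervalIntegral.integral_add_adjacent_intervals
      (hcont.intervalIntegrable (μ := MeasureTheory.volume) 0 u)
      (hcont.intervalIntegrable (μ := MeasureTheory.volume) u (2*(A/β)))
    have h2 : 0 ≤ ∫ s in u..(2*(A/β)), tent A β s :=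
      intervalIntegral.integral_nonneg hu.2 (fun s _ => tent_nonneg hA hβ s)
    have : J u + (∫ s in u..(2*(A/β)), tent A β s) = A ^ 2 / β := by
      rw [hJdef]; simp only; rw [hadd]; exact hJval
    linarith
  -- main argument
  intro t ht hU
  set e := WithLp.prodContinuousLinearEquiv 1 ℝ ℝ ℝ with he
  have hnorm : ∀ x y : ℝ, ‖e.symm (x, y)‖ = |x| + |y| := by
    intro x y
    rw [WithLp.prod_norm_eq_add (by norm_num)]
    have h1 : (e.symm (x, y)).fst = x := rfl
    have h2 : (e.symm (x, y)).snd = y := rfl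
    rw [h1, h2]
    norm_num [Real.norm_eq_abs]
  set g : ℝ → WithLp 1 (ℝ × ℝ) := fun s => e.symm (v s - vstar - J s, w s - wstar) with hg
  set g' : ℝ → WithLp 1 (ℝ × ℝ) :=
    fun s => e.symm (F (v s) - w s, b * v s - c * w s) with hg'
  have hgd : ∀ s ∈ Set.Icc (0:ℝ) t, HasDerivAt g (g' s) s := by
    intro s hs
    have hs2T : s ∈ Set.Icc (0:ℝ) (2 * (A / β)) := ⟨hs.1, le_trans hs.2 ht.2⟩
    obtain ⟨hv', hw'⟩ := hsol s hs2T
    have h1 : HasDerivAt (fun u => v u - vstar - J u) (F (v s) - w s) s := by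
      have := (hv'.sub_const vstar).sub (hJd s)
      exact this.congr_deriv (by ring)
    have h2 : HasDerivAt (fun u => w u - wstar) (b * v s - c * w s) s :=
      hw'.sub_const wstar
    exact (e.symm.toContinuousLinearMap.hasFDerivAt).comp_hasDerivAt s (h1.prodMk h2)
  have hcontg : ContinuousOn g (Set.Icc (0:ℝ) t) := fun s hs =>
    ((hgd s hs).continuousAt).continuousWithinAt
  have hg0 : ‖g 0‖ ≤ 0 := by
    rw [hg]; simp only
    rw [hnorm, hv0, hw0, hJ0]
    simp
  have hbound : ∀ s ∈ Set.Ico (0:ℝ) t,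
      ‖g' s‖ ≤ (2 * k) * ‖g s‖ + 2 * k * (A ^ 2 / β) := by
    intro s hs
    have hsIcc : s ∈ Set.Icc (0:ℝ) t := ⟨hs.1, hs.2.le⟩
    have hvsU : v s ∈ U := hU s hsIcc
    have hF : |F (v s) - F vstar| ≤ (k:ℝ) * |v s - vstar| := by
      have := hLip.dist_le_mul (v s) hvsU vstar hvU
      simpa [Real.dist_eq] using this
    have hJs0 : 0 ≤ J s := hJnonneg s hs.1
    have hJsA : J s ≤ A ^ 2 / β := hJle s ⟨hs.1, le_trans hs.2.le ht.2⟩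
    have hA1 : F (v s) - w s = (F (v s) - F vstar) - (w s - wstar) := by linarith
    have hA2 : b * v s - c * w s = b * (v s - vstar) - c * (w s - wstar) := by
      ring_nf
      linarith [heq2]
    have e1 : |F (v s) - w s| ≤ (k:ℝ) * |v s - vstar| + |w s - wstar| := by
      rw [hA1]
      exact le_trans (abs_sub _ _) (add_le_add hF le_rfl)
    have e2 : |b * v s - c * w s| ≤ (k:ℝ) * |v s - vstar| + (k:ℝ) * |w s - wstar| := by
      rw [hA2]
      refine le_trans (abs_sub _ _) (add_le_add ?_ ?_)
      · rw [abs_mul, abs_of_pos hb]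
        exact mul_le_mul_of_nonneg_right hkb (abs_nonneg _)
      · rw [abs_mul, abs_of_nonneg hc]
        exact mul_le_mul_of_nonneg_right hkc (abs_nonneg _)
    have etri : |v s - vstar| ≤ |v s - vstar - J s| + J s := by
      have := abs_sub_abs_le_abs_sub (v s - vstar) (J s)
      have habsJ : |J s| = J s := abs_of_nonneg hJs0
      calc |v s - vstar| = |(v s - vstar - J s) + J s| := by ring_nf
        _ ≤ |v s - vstar - J s| + |J s| := abs_add_le _ _
        _ = |v s - vstar - J s| + J s := by rw [habsJ]
    rw [hg', hg]; simp only
    rw [hnorm, hnorm]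
    have hk0 : (0:ℝ) ≤ k := le_trans zero_le_one hk1
    nlinarith [e1, e2, etri, abs_nonneg (w s - wstar), abs_nonneg (v s - vstar - J s),
      mul_le_mul_of_nonneg_left hJsA hk0, mul_le_mul_of_nonneg_left etri hk0,
      mul_le_mul_of_nonneg_left (abs_nonneg (v s - vstar)) hk0]
  have hK0 : (2 * (k:ℝ)) ≠ 0 := by positivity
  have hmain := norm_le_gronwallBound_of_norm_deriv_right_le hcontg
    (fun s hs => (hgd s ⟨hs.1, hs.2.le⟩).hasDerivWithinAt) hg0 hbound t
    ⟨ht.1, le_refl t⟩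
  rw [gronwallBound_of_K_ne_0 hK0] at hmain
  have hmain2 : ‖g t‖ ≤ A ^ 2 / β * (Real.exp (2 * k * t) - 1) := by
    refine le_trans hmain (le_of_eq ?_)
    simp only [sub_zero, zero_mul, zero_add]
    field_simp
  have hgt : ‖g t‖ = |v t - vstar - J t| + |w t - wstar| := by
    rw [hg]; simp only; rw [hnorm]
  have hJt0 : 0 ≤ J t := hJnonneg t ht.1
  have hJtA : J t ≤ A ^ 2 / β := hJle t ht
  have etri : |v t - vstar| ≤ |v t - vstar - J t| + J t := by
    calc |v t - vstar| = |(v t - vstar - J t) + J t| := by ring_nf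
      _ ≤ |v t - vstar - J t| + |J t| := abs_add_le _ _
      _ = |v t - vstar - J t| + J t := by rw [abs_of_nonneg hJt0]
  rw [hgt] at hmain2
  have hexp : Real.exp (2 * k * t) ≤ Real.exp (4 * k * A / β) := by
    apply Real.exp_le_exp.2
    have hk0 : (0:ℝ) ≤ k := le_trans zero_le_one hk1
    have : 2 * (k:ℝ) * t ≤ 2 * k * (2 * (A / β)) :=
      mul_le_mul_of_nonneg_left ht.2 (by positivity)
    calc 2 * (k:ℝ) * t ≤ 2 * k * (2 * (A / β)) := this
      _ = 4 * k * A / β := by field_simp; ring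
  have hAB : 0 ≤ A ^ 2 / β := by positivity
  have h1exp : (1:ℝ) ≤ Real.exp (2 * k * t) := by
    rw [← Real.exp_zero]
    apply Real.exp_le_exp.2
    have hk0 : (0:ℝ) ≤ k := le_trans zero_le_one hk1
    exact mul_nonneg (by positivity) ht.1
  calc |v t - vstar| + |w t - wstar|
      ≤ (|v t - vstar - J t| + |w t - wstar|) + J t := by linarith
    _ ≤ A ^ 2 / β * (Real.exp (2 * k * t) - 1) + A ^ 2 / β := by linarith [hmain2]
    _ = A ^ 2 / β * Real.exp (2 * k * t) := by ring
    _ ≤ A ^ 2 / β * Real.exp (4 * k * A / β) := by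
        exact mul_le_mul_of_nonneg_left hexp hAB
end

section
/- Let Φ((cw⁻/b, w⁻), t; I) denote the solution of v' = F(v) − w + I, w' = b·v − c·w starting at the point (cw⁻/b, w⁻) on the w-nullcline. Fix a target point (v_t, w_t) with v_t > cw⁻/b and w_t > w⁻, and let k = min{F(v) − w : v ∈ [cw⁻/b, v_t], w ∈ [w⁻, w_t]}. Then the time for the trajectory to reach {v = v_t} is at most (v_t − cw⁻/b)/(k + I) (for I > −k), while the time to reach {w = w_t} is at least (w_t − w⁻)/(b·v_t − c·w⁻). Hence for I sufficiently large, the trajectory reaches {v = v_t} before {w = w_t}. -/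
/-- rectangle estimates for the trajectory of
`v' = F(v) - w + I`, `w' = b v - c w` started at `(c w⁻ / b, w⁻)` on the
`w`-nullcline. While the trajectory stays in the rectangle
`[c w⁻ / b, v_t] × [w⁻, w_t]`, with `k` the minimum of `F(v) - w` there, we have
`v(t) ≥ c w⁻ / b + (k + I) t` (so it reaches `{v = v_t}` by time
`(v_t - c w⁻ / b)/(k + I)`) and `w(t) ≤ w⁻ + (b v_t - c w⁻) t` (so it cannot
reach `{w = w_t}` before time `(w_t - w⁻)/(b v_t - c w⁻)`); hence for `I`
sufficiently large the former time bound is smaller than the latter. -/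
theorem stmt_15 (F : ℝ → ℝ) (hFcont : Continuous F)
    (b c wm vt wt k I : ℝ) (hb : 0 < b) (hc : 0 ≤ c)
    (hvt : c * wm / b < vt) (hwt : wm < wt) (hwpos : 0 < b * vt - c * wm)
    (hk : IsGLB ((fun p : ℝ × ℝ => F p.1 - p.2) ''
      (Set.Icc (c * wm / b) vt ×ˢ Set.Icc wm wt)) k)
    (hI : 0 < k + I)
    (v w : ℝ → ℝ) (hv0 : v 0 = c * wm / b) (hw0 : w 0 = wm)
    (hsol : ∀ t : ℝ, 0 ≤ t →
      HasDerivAt v (F (v t) - w t + I) t ∧ HasDerivAt w (b * v t - c * w t) t) :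
    (∀ t : ℝ, 0 ≤ t →
      (∀ s ∈ Set.Icc (0:ℝ) t,
        v s ∈ Set.Icc (c * wm / b) vt ∧ w s ∈ Set.Icc wm wt) →
      c * wm / b + (k + I) * t ≤ v t ∧ w t ≤ wm + (b * vt - c * wm) * t) ∧
    (∃ I₀ : ℝ, ∀ I' : ℝ, I₀ ≤ I' →
      (vt - c * wm / b) / (k + I') < (wt - wm) / (b * vt - c * wm)) := by
  constructor
  · intro t ht hrect
    -- auxiliary functions
    have hA : ∀ s ∈ Set.Icc (0:ℝ) t,
        HasDerivAt (fun s => v s - (k + I) * s)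
          ((F (v s) - w s + I) - (k + I)) s := by
      intro s hs
      have h1 := (hsol s hs.1).1
      have h2 : HasDerivAt (fun s : ℝ => (k + I) * s) (k + I) s := by
        simpa using (hasDerivAt_id s).const_mul (k + I)
      exact h1.sub h2
    have hB : ∀ s ∈ Set.Icc (0:ℝ) t,
        HasDerivAt (fun s => (b * vt - c * wm) * s - w s)
          ((b * vt - c * wm) - (b * v s - c * w s)) s := by
      intro s hs
      have h1 := (hsol s hs.1).2
      have h2 : HasDerivAt (fun s : ℝ => (b * vt - c * wm) * s) (b * vt - c * wm) s := by
        simpa using (hasDerivAt_id s).const_mul (b * vt - c * wm)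
      exact h2.sub h1
    have hgA : MonotoneOn (fun s => v s - (k + I) * s) (Set.Icc 0 t) := by
      apply monotoneOn_of_deriv_nonneg (convex_Icc 0 t)
      · exact fun s hs => ((hA s hs).continuousAt).continuousWithinAt
      · intro s hs
        rw [interior_Icc] at hs
        exact ((hA s ⟨hs.1.le, hs.2.le⟩).differentiableAt).differentiableWithinAt
      · intro s hs
        rw [interior_Icc] at hs
        have hsI : s ∈ Set.Icc (0:ℝ) t := ⟨hs.1.le, hs.2.le⟩
        rw [(hA s hsI).deriv]
        have hks : k ≤ F (v s) - w s := by
          have hmem : (v s, w s) ∈ Set.Icc (c * wm / b) vt ×ˢ Set.Icc wm wt :=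
            ⟨(hrect s hsI).1, (hrect s hsI).2⟩
          exact hk.1 (Set.mem_image_of_mem _ hmem)
        linarith
    have hgB : MonotoneOn (fun s => (b * vt - c * wm) * s - w s) (Set.Icc 0 t) := by
      apply monotoneOn_of_deriv_nonneg (convex_Icc 0 t)
      · exact fun s hs => ((hB s hs).continuousAt).continuousWithinAt
      · intro s hs
        rw [interior_Icc] at hs
        exact ((hB s ⟨hs.1.le, hs.2.le⟩).differentiableAt).differentiableWithinAt
      · intro s hs
        rw [interior_Icc] at hs
        have hsI : s ∈ Set.Icc (0:ℝ) t := ⟨hs.1.le, hs.2.le⟩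
        rw [(hB s hsI).deriv]
        have h1 : v s ≤ vt := ((hrect s hsI).1).2
        have h2 : wm ≤ w s := ((hrect s hsI).2).1
        have h3 : b * v s ≤ b * vt := by nlinarith
        have h4 : c * wm ≤ c * w s := by nlinarith
        linarith
    have h0 : (0:ℝ) ∈ Set.Icc (0:ℝ) t := ⟨le_refl 0, ht⟩
    have htI : t ∈ Set.Icc (0:ℝ) t := ⟨ht, le_refl t⟩
    have e1 := hgA h0 htI ht
    have e2 := hgB h0 htI ht
    simp only [mul_zero, sub_zero, hv0, hw0] at e1 e2
    constructor <;> linarith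
  · have hApos : 0 < vt - c * wm / b := by linarith
    set A : ℝ := vt - c * wm / b with hAdef
    have hRpos : 0 < (wt - wm) / (b * vt - c * wm) := div_pos (by linarith) hwpos
    set R : ℝ := (wt - wm) / (b * vt - c * wm) with hRdef
    refine ⟨-k + A / R + 1, fun I' hI' => ?_⟩
    have h1 : A / R + 1 ≤ k + I' := by linarith
    have h2 : 0 < A / R := div_pos hApos hRpos
    have h3 : A / R < k + I' := by linarith
    have h4 : A / (k + I') < A / (A / R) :=
      div_lt_div_of_pos_left hApos h2 h3
    have h5 : A / (A / R) = R := by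
      field_simp
    linarith [h4, h5.symm ▸ h4]
end
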